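/- Let A be a commutative ring, e₁, e₂ orthogonal idempotents with e₁ + e₂ = 1, and 𝒪 a subring of A such that e₁𝒪 and e₂𝒪 are contained in A. With J = (e₁𝒪 ∩ 𝒪) + (e₂𝒪 ∩ 𝒪) and φᵢ : eᵢ𝒪 → 𝒪/J as above, an element u = a₁ + a₂ with aᵢ ∈ eᵢ𝒪 is a unit of 𝒪 if and only if a₁ is a unit of the ring e₁𝒪, a₂ is a unit of e₂𝒪, and φ₁(a₁) = φ₂(a₂), φ₁(a₁⁻¹) = φ₂(a₂⁻¹). -/
import Mathlib


/-- `u = e₁x + e₂y` is a unit of `𝒪` iff `e₁x` is a unit of `e₁𝒪`, `e₂y` is a unit of `e₂𝒪`,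
`φ₁(a₁) = φ₂(a₂)` (i.e. `x - y ∈ J`), and `φ₁(a₁⁻¹) = φ₂(a₂⁻¹)` (i.e. `x' - y' ∈ J`). -/
theorem stmt8 {A : Type*} [CommRing A] (e₁ e₂ : A)
    (he₁ : e₁ * e₁ = e₁) (he₂ : e₂ * e₂ = e₂)
    (horth : e₁ * e₂ = 0) (hsum : e₁ + e₂ = 1)
    (O : Subring A) (J : Set A)
    (hJ : J = {y : A | ∃ c ∈ O, ∃ d ∈ O, (∃ c' ∈ O, c = e₁ * c') ∧
      (∃ d' ∈ O, d = e₂ * d') ∧ y = c + d})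
    (x y : A) (hx : x ∈ O) (hy : y ∈ O) (u : A) (hu : u = e₁ * x + e₂ * y) :
    (u ∈ O ∧ ∃ v ∈ O, u * v = 1) ↔
      ((∃ x' ∈ O, ∃ y' ∈ O, (e₁ * x) * (e₁ * x') = e₁ ∧ (e₂ * y) * (e₂ * y') = e₂ ∧
        x' - y' ∈ J) ∧ x - y ∈ J) := by
  subst hu hJ
  constructor
  · rintro ⟨huO, v, hvO, huv⟩
    refine ⟨⟨v, hvO, v, hvO, ?_, ?_, ?_⟩, ?_⟩
    · linear_combination e₁ * huv - y * v * horth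
    · linear_combination e₂ * huv - x * v * horth
    · exact ⟨0, zero_mem _, 0, zero_mem _, ⟨0, zero_mem _, by ring⟩,
        ⟨0, zero_mem _, by ring⟩, by ring⟩
    · refine ⟨(e₁ * x + e₂ * y) - y, sub_mem huO hy, x - (e₁ * x + e₂ * y),
        sub_mem hx huO, ⟨x - y, sub_mem hx hy, ?_⟩, ⟨x - y, sub_mem hx hy, ?_⟩, by ring⟩
      · linear_combination y * hsum
      · linear_combination (-x) * hsum
  · rintro ⟨⟨x', hx', y', hy', h1, h2, hxy'⟩, hxy⟩
    obtain ⟨c, hc, d, hd, ⟨c₁, hc₁, hcc⟩, ⟨d₁, hd₁, hdd⟩, hsumxy⟩ := hxy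
    obtain ⟨c', hc', d', hd', ⟨c₁', hc₁', hcc'⟩, ⟨d₁', hd₁', hdd'⟩, hsumxy'⟩ := hxy'
    subst hcc hdd hcc' hdd'
    have huO : e₁ * x + e₂ * y = x - e₂ * d₁ := by
      linear_combination x * hsum - e₂ * hsumxy - c₁ * horth - d₁ * he₂
    have hvO : e₁ * x' + e₂ * y' = x' - e₂ * d₁' := by
      linear_combination x' * hsum - e₂ * hsumxy' - c₁' * horth - d₁' * he₂
    refine ⟨huO ▸ sub_mem hx hd, e₁ * x' + e₂ * y', hvO ▸ sub_mem hx' hd', ?_⟩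
    linear_combination h1 + h2 + (x * y' + y * x') * horth + hsum
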